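/- Let H be the Hoffman–Singleton graph. Then the maximum size of an induced matching in H is at most 10. -/

import Mathlib

open scoped Classical

def IsInducedMatching {V : Type*} (G : SimpleGraph V) (M : Finset (Sym2 V)) : Prop :=
  (↑M : Set (Sym2 V)) ⊆ G.edgeSet ∧
    ∀ e ∈ M, ∀ f ∈ M, e ≠ f → ∀ u ∈ e, ∀ v ∈ f, u ≠ v ∧ ¬ G.Adj u v

private lemma mem_edge_iff' {V : Type*} {e : Sym2 V} {a : V} (h : a ∈ e) (x : V) :
    x ∈ e ↔ x = a ∨ x = Sym2.Mem.other h := by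
  conv_lhs => rw [← Sym2.other_spec h]
  exact Sym2.mem_iff

theorem stmt19 {V : Type*} [Fintype V] (G : SimpleGraph V) [DecidableRel G.Adj]
    (hcard : Fintype.card V = 50) (hreg : G.IsRegularOfDegree 7)
    (htf : G.CliqueFree 3)
    (huniq : ∀ u v : V, u ≠ v → ¬ G.Adj u v → ∃! w, G.Adj u w ∧ G.Adj w v)
    (M : Finset (Sym2 V)) (hM : IsInducedMatching G M) : M.card ≤ 10 := by
  obtain ⟨hsub, hind⟩ := hM
  set m := M.card with hm
  set S : Finset V := M.biUnion (fun e => Finset.univ.filter (· ∈ e)) with hSdef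
  have hmemS : ∀ v : V, v ∈ S ↔ ∃ e ∈ M, v ∈ e := by
    intro v; simp [hSdef]
  have hadj_other : ∀ e ∈ M, ∀ a, ∀ h : a ∈ e, G.Adj a (Sym2.Mem.other h) := by
    intro e he a h
    have h1 : e ∈ G.edgeSet := hsub he
    rw [← Sym2.other_spec h] at h1
    exact h1
  -- |S| = 2m
  have hecard : ∀ e ∈ M, (Finset.univ.filter (· ∈ e)).card = 2 := by
    intro e he
    have ha : e.out.1 ∈ e := Sym2.out_fst_mem e
    set a := e.out.1
    have hadj := hadj_other e he a ha
    have hne : a ≠ Sym2.Mem.other ha := hadj.ne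
    have : Finset.univ.filter (· ∈ e) = {a, Sym2.Mem.other ha} := by
      ext x
      simp [mem_edge_iff' ha x]
    rw [this, Finset.card_pair hne]
  have hScard : S.card = 2 * m := by
    rw [hSdef, Finset.card_biUnion]
    · rw [Finset.sum_congr rfl hecard, Finset.sum_const, smul_eq_mul, ← hm]
      ring
    · intro e he f hf hef
      refine Finset.disjoint_left.mpr ?_
      intro a hae haf
      simp only [Finset.mem_filter, Finset.mem_univ, true_and] at hae haf
      exact ((hind e he f hf hef a hae a haf).1 rfl).elim
  -- each matched vertex has exactly one neighbour in S
  have hA : ∀ s ∈ S, (S.filter (fun t => G.Adj s t)).card = 1 := by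
    intro s hs
    obtain ⟨e, he, hse⟩ := (hmemS s).mp hs
    have hadj : G.Adj s (Sym2.Mem.other hse) := hadj_other e he s hse
    have htS : Sym2.Mem.other hse ∈ S := (hmemS _).mpr ⟨e, he, Sym2.other_mem hse⟩
    rw [Finset.card_eq_one]
    refine ⟨Sym2.Mem.other hse, ?_⟩
    ext x
    simp only [Finset.mem_filter, Finset.mem_singleton]
    constructor
    · rintro ⟨hxS, hax⟩
      obtain ⟨f, hf, hxf⟩ := (hmemS x).mp hxS
      by_cases hef : e = f
      · subst hef
        rcases (mem_edge_iff' hse x).mp hxf with h1 | h1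
        · exact absurd (h1 ▸ hax) (G.loopless.irrefl s)
        · exact h1
      · exact absurd hax ((hind e he f hf hef s hse x hxf).2)
    · rintro rfl; exact ⟨htS, hadj⟩
  -- degrees
  have hdeg : ∀ v : V, (Finset.univ.filter (fun t => G.Adj v t)).card = 7 := by
    intro v
    have := hreg v
    rwa [← SimpleGraph.neighborFinset_eq_filter]
  -- each matched vertex has exactly 6 neighbours outside S
  have hB : ∀ s ∈ S, (Sᶜ.filter (fun w => G.Adj s w)).card = 6 := by
    intro s hs
    have h7 := hdeg s
    have hsplit : (S.filter (fun w => G.Adj s w)).card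
        + (Sᶜ.filter (fun w => G.Adj s w)).card
        = (Finset.univ.filter (fun w => G.Adj s w)).card := by
      rw [← Finset.card_union_of_disjoint
        (Finset.disjoint_filter_filter disjoint_compl_right), ← Finset.filter_union,
        Finset.union_compl]
    rw [hA s hs, h7] at hsplit
    omega
  -- common neighbours outside S
  have hC : ∀ s ∈ S, ∀ t ∈ S, s ≠ t →
      (Sᶜ.filter (fun w => G.Adj s w ∧ G.Adj t w)).card
        = if G.Adj s t then 0 else 1 := by
    intro s hs t ht hst
    by_cases hadj : G.Adj s t
    · rw [if_pos hadj, Finset.card_eq_zero, Finset.filter_eq_empty_iff]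
      rintro w - ⟨h1, h2⟩
      exact htf {s, t, w} (SimpleGraph.is3Clique_triple_iff.mpr ⟨hadj, h1, h2⟩)
    · rw [if_neg hadj]
      obtain ⟨w, ⟨hw1, hw2⟩, hwu⟩ := huniq s t hst hadj
      have hwS : w ∉ S := by
        intro hwS
        obtain ⟨f, hf, hwf⟩ := (hmemS w).mp hwS
        obtain ⟨e, he, hse⟩ := (hmemS s).mp hs
        obtain ⟨e', he', hte⟩ := (hmemS t).mp ht
        by_cases hef : e = f
        · subst hef
          by_cases h'' : e' = e
          · subst h''
            have hw' : w = Sym2.Mem.other hse := by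
              rcases (mem_edge_iff' hse w).mp hwf with h1 | h1
              · exact absurd h1.symm hw1.ne
              · exact h1
            have ht' : t = Sym2.Mem.other hse := by
              rcases (mem_edge_iff' hse t).mp hte with h1 | h1
              · exact absurd h1.symm hst
              · exact h1
            have : w = t := hw'.trans ht'.symm
            rw [this] at hw2
            exact G.loopless.irrefl t hw2
          · exact (hind e he e' he' (fun hh => h'' hh.symm) w hwf t hte).2 hw2
        · exact (hind e he f hf hef s hse w hwf).2 hw1
      rw [Finset.card_eq_one]
      refine ⟨w, ?_⟩
      ext x
      simp only [Finset.mem_filter, Finset.mem_compl, Finset.mem_singleton]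
      constructor
      · rintro ⟨-, hx1, hx2⟩
        exact hwu x ⟨hx1, hx2.symm⟩
      · rintro rfl
        exact ⟨hwS, hw1, hw2.symm⟩
  -- 2m ≤ 50
  have h2m : 2 * m ≤ 50 := by
    have := Finset.card_le_univ S
    rw [hScard, hcard] at this
    exact this
  have hW : Sᶜ.card = 50 - 2 * m := by
    rw [Finset.card_compl, hScard, hcard]
  -- first moment
  have sum1 : ∑ w ∈ Sᶜ, (S.filter (fun s => G.Adj s w)).card = 12 * m := by
    calc ∑ w ∈ Sᶜ, (S.filter (fun s => G.Adj s w)).card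
        = ∑ w ∈ Sᶜ, ∑ s ∈ S, if G.Adj s w then 1 else 0 := by
          exact Finset.sum_congr rfl fun w _ => Finset.card_filter _ _
      _ = ∑ s ∈ S, ∑ w ∈ Sᶜ, if G.Adj s w then 1 else 0 := Finset.sum_comm
      _ = ∑ s ∈ S, (Sᶜ.filter (fun w => G.Adj s w)).card := by
          exact Finset.sum_congr rfl fun s _ => (Finset.card_filter _ _).symm
      _ = ∑ _s ∈ S, 6 := Finset.sum_congr rfl hB
      _ = 12 * m := by rw [Finset.sum_const, hScard, smul_eq_mul]; ring
  -- second moment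
  have sum2 : ∑ w ∈ Sᶜ, (S.filter (fun s => G.Adj s w)).card
      * (S.filter (fun s => G.Adj s w)).card = 4 * m * m + 8 * m := by
    have step : ∀ w : V, (S.filter (fun s => G.Adj s w)).card
        * (S.filter (fun s => G.Adj s w)).card
        = ∑ s ∈ S, ∑ t ∈ S, if G.Adj s w ∧ G.Adj t w then 1 else 0 := by
      intro w
      rw [Finset.card_filter, Finset.sum_mul_sum]
      refine Finset.sum_congr rfl fun s _ => Finset.sum_congr rfl fun t _ => ?_
      by_cases h1 : G.Adj s w <;> by_cases h2 : G.Adj t w <;> simp [h1, h2]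
    have inner : ∀ s ∈ S,
        ∑ t ∈ S, (Sᶜ.filter (fun w => G.Adj s w ∧ G.Adj t w)).card = 2 * m + 4 := by
      intro s hs
      have hdiag : (Sᶜ.filter (fun w => G.Adj s w ∧ G.Adj s w)).card = 6 := by
        simpa only [and_self] using hB s hs
      have hsplit : (Sᶜ.filter (fun w => G.Adj s w ∧ G.Adj s w)).card
          + ∑ t ∈ S.erase s, (Sᶜ.filter (fun w => G.Adj s w ∧ G.Adj t w)).card
          = ∑ t ∈ S, (Sᶜ.filter (fun w => G.Adj s w ∧ G.Adj t w)).card :=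
        Finset.add_sum_erase S
          (fun t => (Sᶜ.filter (fun w => G.Adj s w ∧ G.Adj t w)).card) hs
      have herase : ∑ t ∈ S.erase s,
          (Sᶜ.filter (fun w => G.Adj s w ∧ G.Adj t w)).card
          = ∑ t ∈ S.erase s, if G.Adj s t then 0 else 1 := by
        refine Finset.sum_congr rfl fun t ht => ?_
        exact hC s hs t (Finset.mem_of_mem_erase ht)
          (fun hh => (Finset.ne_of_mem_erase ht) hh.symm)
      have hcount : ∑ t ∈ S.erase s, (if G.Adj s t then 0 else 1)
          = (S.erase s).card - ((S.erase s).filter (fun t => G.Adj s t)).card := by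
        rw [show (∑ t ∈ S.erase s, if G.Adj s t then 0 else 1)
            = ∑ t ∈ S.erase s, if ¬ G.Adj s t then 1 else 0 by
          refine Finset.sum_congr rfl fun t _ => ?_
          by_cases h : G.Adj s t <;> simp [h]]
        rw [← Finset.card_filter]
        have := Finset.card_filter_add_card_filter_not
          (s := S.erase s) (p := fun t => G.Adj s t)
        omega
      have hfe : ((S.erase s).filter (fun t => G.Adj s t)).card = 1 := by
        rw [Finset.filter_erase, Finset.erase_eq_of_notMem
          (by simp [G.loopless.irrefl s]), hA s hs]
      have hce : (S.erase s).card = 2 * m - 1 := by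
        rw [Finset.card_erase_of_mem hs, hScard]
      have hm1 : 1 ≤ 2 * m := by
        have : 0 < S.card := Finset.card_pos.mpr ⟨s, hs⟩
        omega
      omega
    calc ∑ w ∈ Sᶜ, (S.filter (fun s => G.Adj s w)).card
          * (S.filter (fun s => G.Adj s w)).card
        = ∑ w ∈ Sᶜ, ∑ s ∈ S, ∑ t ∈ S, if G.Adj s w ∧ G.Adj t w then 1 else 0 :=
          Finset.sum_congr rfl fun w _ => step w
      _ = ∑ s ∈ S, ∑ w ∈ Sᶜ, ∑ t ∈ S, (if G.Adj s w ∧ G.Adj t w then 1 else 0) :=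
          Finset.sum_comm
      _ = ∑ s ∈ S, ∑ t ∈ S, ∑ w ∈ Sᶜ, (if G.Adj s w ∧ G.Adj t w then 1 else 0) :=
          Finset.sum_congr rfl fun s _ => Finset.sum_comm
      _ = ∑ s ∈ S, ∑ t ∈ S, (Sᶜ.filter (fun w => G.Adj s w ∧ G.Adj t w)).card :=
          Finset.sum_congr rfl fun s _ => Finset.sum_congr rfl
            fun t _ => (Finset.card_filter _ _).symm
      _ = ∑ _s ∈ S, (2 * m + 4) := Finset.sum_congr rfl inner
      _ = 4 * m * m + 8 * m := by
          rw [Finset.sum_const, hScard, smul_eq_mul]; ring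
  -- Cauchy–Schwarz
  have cs := sq_sum_le_card_mul_sum_sq
    (s := Sᶜ) (f := fun w => ((S.filter (fun s => G.Adj s w)).card : ℤ))
  have e1 : ∑ w ∈ Sᶜ, ((S.filter (fun s => G.Adj s w)).card : ℤ) = 12 * m := by
    rw [← Nat.cast_sum, sum1]; push_cast; ring
  have e2 : ∑ w ∈ Sᶜ, ((S.filter (fun s => G.Adj s w)).card : ℤ) ^ 2
      = 4 * m * m + 8 * m := by
    have : ∑ w ∈ Sᶜ, ((S.filter (fun s => G.Adj s w)).card : ℤ) ^ 2
        = ((∑ w ∈ Sᶜ, (S.filter (fun s => G.Adj s w)).card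
          * (S.filter (fun s => G.Adj s w)).card : ℕ) : ℤ) := by
      push_cast
      exact Finset.sum_congr rfl fun w _ => by ring
    rw [this, sum2]; push_cast; ring
  rw [e1, e2] at cs
  have e3 : (Sᶜ.card : ℤ) = 50 - 2 * m := by
    rw [hW, Nat.cast_sub h2m]; push_cast; ring
  rw [e3] at cs
  by_contra hcon
  push_neg at hcon
  have hm11 : (11 : ℤ) ≤ (m : ℤ) := by exact_mod_cast hcon
  nlinarith [mul_pos (mul_pos (show (0:ℤ) < 8 * (m:ℤ) by linarith)
    (show (0:ℤ) < (m:ℤ) - 10 by linarith)) (show (0:ℤ) < (m:ℤ) + 5 by linarith), cs]
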